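/- Let M and N be topological spaces, b ∈ M, r ∈ N, f : M → N a function, h₁, h₂ : M → M continuous maps each homotopic to the identity map of M, and φ : M × M × N → M × M × N a continuous map that is homotopic to the identity map of M × M × N and satisfies φ(x, b, r) = (h₁ x, h₂ x, f x) for all x ∈ M. Then M is a contractible topological space. -/

import Mathlib

/-- No-approximate-cloning theorem (topological form): if `h₁, h₂ : M → M` are continuous
maps homotopic to the identity and `φ` is a continuous self-map of `M × M × N` homotopic
to the identity with `φ (x, b, r) = (h₁ x, h₂ x, f x)` for all `x`, then `M` is
contractible. -/
theorem no_approximate_cloning_contractible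
    {M N : Type*} [TopologicalSpace M] [TopologicalSpace N]
    (b : M) (r : N) (f : M → N)
    (h₁ h₂ : C(M, M))
    (hh₁ : h₁.Homotopic (ContinuousMap.id M))
    (hh₂ : h₂.Homotopic (ContinuousMap.id M))
    (φ : C(M × M × N, M × M × N))
    (hφ : φ.Homotopic (ContinuousMap.id (M × M × N)))
    (hclone : ∀ x : M, φ (x, b, r) = (h₁ x, h₂ x, f x)) :
    ContractibleSpace M := by
  let ι : C(M, M × M × N) := ⟨fun x => (x, b, r), continuous_id.prodMk (continuous_const.prodMk continuous_const)⟩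
  let p : C(M × M × N, M) := ⟨fun z => z.2.1, (continuous_fst.comp continuous_snd)⟩
  have key : (p.comp (φ.comp ι)).Homotopic (p.comp ((ContinuousMap.id _).comp ι)) :=
    ContinuousMap.Homotopic.comp (ContinuousMap.Homotopic.refl p) (ContinuousMap.Homotopic.comp hφ (ContinuousMap.Homotopic.refl ι))
  have e1 : p.comp (φ.comp ι) = h₂ := by
    ext x
    simp [p, ι, hclone x]
  have e2 : p.comp ((ContinuousMap.id _).comp ι) = ContinuousMap.const M b := by
    ext x; rfl
  rw [e1, e2] at key
  have : (ContinuousMap.id M).Nullhomotopic := ⟨b, hh₂.symm.trans key⟩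
  exact (contractible_iff_id_nullhomotopic M).mpr this
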